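/- arXiv:2311.11635 — 2 statements merged into one kernel-verified Lean document; each statement's English description precedes it below -/
import Mathlib

section
/- Let T > 0, let u, v: [0,T] → ℝ be bounded measurable functions, and let p, q ∈ L²([0,T],ℝ). Then sup over f, g ∈ C¹([0,T],ℝ) of ∫₀^T { f(r)u(r)p(r) + g(r)v(r)q(r) − (f(r)u(r) + g(r)v(r))² } dr is finite if and only if p = q almost everywhere on the set {r ∈ [0,T] : u(r)v(r) ≠ 0}. -/
open MeasureTheory Set Filter

open scoped ENNReal NNReal
set_option maxHeartbeats 4000000

lemma sq_integral_le_of_eLpNorm_le {μ : Measure ℝ} {d : ℝ → ℝ}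
    (hd : AEStronglyMeasurable d μ) {δ : ℝ} (hδ : 0 ≤ δ)
    (hle : eLpNorm d 2 μ ≤ ENNReal.ofReal δ) : ∫ r, (d r) ^ 2 ∂μ ≤ δ ^ 2 := by
  have h1 : ∫ r, (d r) ^ 2 ∂μ = (∫⁻ r, ENNReal.ofReal ((d r) ^ 2) ∂μ).toReal := by
    rw [integral_eq_lintegral_of_nonneg_ae (Filter.Eventually.of_forall fun x => sq_nonneg _)
      (hd.pow 2)]
  have h2 : ∀ r, ENNReal.ofReal ((d r) ^ 2) = ((‖d r‖₊ : ℝ≥0∞)) ^ (2 : ℝ) := by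
    intro r
    have h0 : ((‖d r‖₊ : ℝ≥0∞)) ^ (2 : ℝ) = ((‖d r‖₊ : ℝ≥0∞)) ^ (2 : ℕ) := by
      rw [← ENNReal.rpow_natCast]; norm_num
    rw [h0, ← enorm_eq_nnnorm, ← ofReal_norm, ← ENNReal.ofReal_pow (norm_nonneg _),
      Real.norm_eq_abs, sq_abs]
  have h3 : eLpNorm d 2 μ = (∫⁻ r, ((‖d r‖₊ : ℝ≥0∞)) ^ (2 : ℝ) ∂μ) ^ (1/2 : ℝ) := by
    rw [eLpNorm_eq_lintegral_rpow_enorm_toReal (by norm_num) (by norm_num)]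
    norm_num [enorm_eq_nnnorm]
  have h4 : (∫⁻ r, ((‖d r‖₊ : ℝ≥0∞)) ^ (2 : ℝ) ∂μ) ≤ (ENNReal.ofReal δ) ^ (2 : ℝ) := by
    have := ENNReal.rpow_le_rpow (h3 ▸ hle) (by norm_num : (0:ℝ) ≤ 2)
    rwa [← ENNReal.rpow_mul, one_div, inv_mul_cancel₀ (by norm_num : (2:ℝ) ≠ 0),
      ENNReal.rpow_one] at this
  have h5 : ((ENNReal.ofReal δ) ^ (2 : ℝ)).toReal = δ ^ 2 := by
    have h0 : ((ENNReal.ofReal δ)) ^ (2 : ℝ) = ((ENNReal.ofReal δ)) ^ (2 : ℕ) := by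
      rw [← ENNReal.rpow_natCast]; norm_num
    rw [h0, ← ENNReal.ofReal_pow hδ, ENNReal.toReal_ofReal (by positivity)]
  calc ∫ r, (d r) ^ 2 ∂μ = (∫⁻ r, ENNReal.ofReal ((d r) ^ 2) ∂μ).toReal := h1
    _ ≤ ((ENNReal.ofReal δ) ^ (2 : ℝ)).toReal := by
        apply ENNReal.toReal_mono (by simp [ENNReal.rpow_natCast]) ?_
        simpa only [h2] using h4
    _ = δ ^ 2 := h5

lemma contDiff_polyeval (P : Polynomial ℝ) : ContDiff ℝ 1 (fun x => P.eval x) := by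
  induction P using Polynomial.induction_on' with
  | add p q hp hq => simpa [Polynomial.eval_add] using hp.add hq
  | monomial n a =>
      simpa [Polynomial.eval_monomial] using (contDiff_const (c := a)).mul (contDiff_id.pow n)

lemma exists_c1_close (T : ℝ) (hT : 0 < T) (h : ℝ → ℝ) (hm : Measurable h) (C : ℝ)
    (hbd : ∀ r, |h r| ≤ C) (hsupp : ∀ r, r ∉ Set.Ioc 0 T → h r = 0) {ε : ℝ} (hε : 0 < ε) :
    ∃ f : ℝ → ℝ, ContDiff ℝ 1 f ∧ ∫ r in Set.Ioc 0 T, (f r - h r) ^ 2 ≤ ε := by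
  set μ := volume.restrict (Set.Ioc 0 T) with hμ
  -- h ∈ L²(volume)
  have hC0 : 0 ≤ C := le_trans (abs_nonneg _) (hbd 0)
  have hind : h = (Set.Ioc 0 T).indicator h := by
    funext r; by_cases hr : r ∈ Set.Ioc 0 T <;> simp [Set.indicator, hr, hsupp r]
  have hmem : MemLp h 2 volume := by
    refine ⟨hm.aestronglyMeasurable, ?_⟩
    rw [hind, eLpNorm_indicator_eq_eLpNorm_restrict measurableSet_Ioc]
    refine lt_of_le_of_lt (eLpNorm_le_of_ae_bound (C := C)
      (Filter.Eventually.of_forall (fun r => by simpa [Real.norm_eq_abs] using hbd r))) ?_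
    exact ENNReal.mul_lt_top (ENNReal.rpow_lt_top_of_nonneg (by positivity)
      (by simp [Real.volume_Ioc])) ENNReal.ofReal_lt_top
  set δ : ℝ := Real.sqrt ε / 4 with hδdef
  have hδpos : 0 < δ := by positivity
  obtain ⟨g, -, hg1, gcont, -⟩ := hmem.exists_hasCompactSupport_eLpNorm_sub_le
    (by norm_num : (2:ℝ≥0∞) ≠ ∞) (ε := ENNReal.ofReal δ) (ENNReal.ofReal_pos.mpr hδpos).ne'
  -- hg1 : eLpNorm (h - g) 2 volume ≤ ofReal δ
  set ε₂ : ℝ := δ / (Real.sqrt T + 1) with hε₂def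
  have hε₂pos : 0 < ε₂ := by positivity
  obtain ⟨P, hP⟩ := exists_polynomial_near_of_continuousOn 0 T g gcont.continuousOn ε₂ hε₂pos
  refine ⟨fun x => P.eval x, contDiff_polyeval P, ?_⟩
  -- eLpNorm (g - Peval) 2 μ ≤ ofReal δ
  have hstep2 : eLpNorm (fun r => g r - P.eval r) 2 μ ≤ ENNReal.ofReal δ := by
    refine le_trans (eLpNorm_le_of_ae_bound (C := ε₂) ?_) ?_
    · filter_upwards [ae_restrict_mem measurableSet_Ioc] with r hr
      have := hP r ⟨hr.1.le, hr.2⟩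
      rw [Real.norm_eq_abs, abs_sub_comm]
      exact this.le
    · have hμuniv : μ Set.univ = ENNReal.ofReal T := by
        simp [hμ, Real.volume_Ioc]
      rw [hμuniv]
      have h2 : (ENNReal.ofReal T) ^ (ENNReal.toReal 2)⁻¹ = ENNReal.ofReal (Real.sqrt T) := by
        rw [show (ENNReal.toReal 2)⁻¹ = (1/2 : ℝ) by norm_num,
          ENNReal.ofReal_rpow_of_nonneg hT.le (by norm_num : (0:ℝ) ≤ 1/2)]
        congr 1
        rw [Real.sqrt_eq_rpow]
      rw [h2, ← ENNReal.ofReal_mul (Real.sqrt_nonneg T)]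
      apply ENNReal.ofReal_le_ofReal
      rw [hε₂def, mul_comm, div_mul_eq_mul_div, div_le_iff₀ (by positivity)]
      nlinarith [Real.sqrt_nonneg T, hδpos]
  have htri : eLpNorm (fun r => h r - P.eval r) 2 μ ≤ ENNReal.ofReal (2 * δ) := by
    have e1 : (fun r => h r - P.eval r) = (fun r => (h r - g r) + (g r - P.eval r)) := by
      funext r; ring
    have a1 : AEStronglyMeasurable (fun r => h r - g r) μ :=
      (hm.aestronglyMeasurable.sub gcont.measurable.aestronglyMeasurable)
    have a2 : AEStronglyMeasurable (fun r => g r - P.eval r) μ :=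
      (gcont.measurable.aestronglyMeasurable.sub
        (contDiff_polyeval P).continuous.measurable.aestronglyMeasurable)
    calc eLpNorm (fun r => h r - P.eval r) 2 μ
        ≤ eLpNorm (fun r => h r - g r) 2 μ + eLpNorm (fun r => g r - P.eval r) 2 μ := by
          rw [e1]; exact eLpNorm_add_le a1 a2 (by norm_num)
      _ ≤ ENNReal.ofReal δ + ENNReal.ofReal δ := by
          refine add_le_add (le_trans ?_ hg1) hstep2
          exact le_trans (le_of_eq rfl) (eLpNorm_mono_measure _ Measure.restrict_le_self)
      _ = ENNReal.ofReal (2 * δ) := by rw [← ENNReal.ofReal_add hδpos.le hδpos.le]; ring_nf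
  have hfinal : ∫ r, ((fun r => P.eval r - h r) r) ^ 2 ∂μ ≤ (2 * δ) ^ 2 := by
    refine sq_integral_le_of_eLpNorm_le ?_ (by positivity) ?_
    · exact (contDiff_polyeval P).continuous.measurable.aestronglyMeasurable.sub
        hm.aestronglyMeasurable
    · have e2 : (fun r => P.eval r - h r) = -(fun r => h r - P.eval r) := by
        funext r; simp
      rw [e2, eLpNorm_neg]
      exact htri
  refine le_trans (le_of_eq ?_) (le_trans hfinal ?_)
  · rfl
  · have h4 : (2 * δ) ^ 2 = ε / 4 := by
      have hs := Real.sq_sqrt hε.le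
      simp only [hδdef]
      linear_combination hs / 4
    rw [h4]; linarith

lemma amgm_abs (x y s : ℝ) (hs : 0 < s) : |x * y| ≤ x ^ 2 / (2 * s) + s * y ^ 2 / 2 := by
  rw [abs_mul, div_add_div _ _ (by positivity : (2*s) ≠ 0) (by norm_num : (2:ℝ) ≠ 0),
    le_div_iff₀ (by positivity)]
  have key : 2 * s * (|x| * |y|) ≤ x ^ 2 + s ^ 2 * y ^ 2 := by
    nlinarith [sq_nonneg (|x| - s * |y|), sq_abs x, sq_abs y]
  nlinarith [key]



/-- The branch of the complex square root mapping `ℂ \ [0,∞)` into the open upper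
half-plane; on `[0,∞)` it is the usual nonnegative real square root. -/
noncomputable def upSqrt (z : ℂ) : ℂ :=
  if z.im = 0 ∧ 0 ≤ z.re then (Real.sqrt z.re : ℂ)
  else Complex.I * (-z) ^ ((1 : ℂ) / 2)

/-- `z ∈ ℂ \ [0,∞)`. -/
def offPosReal (z : ℂ) : Prop := ¬(z.im = 0 ∧ 0 ≤ z.re)

/-- The Cameron–Martin space `H¹₀([0,T],ℝ)`: absolutely continuous `h` with `h 0 = 0`
and derivative `dFun ∈ L²([0,T],ℝ)`, recorded via `h t = ∫₀ᵗ h'`. -/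
structure CM (T : ℝ) where
  toFun : ℝ → ℝ
  dFun : ℝ → ℝ
  measurable_dFun : Measurable dFun
  memL2 : MeasureTheory.MemLp dFun 2 (MeasureTheory.volume.restrict (Set.Ioc 0 T))
  eq_int : ∀ t ∈ Set.Icc 0 T, toFun t = ∫ s in Set.Ioc 0 t, dFun s

/-- `φ` is the solution `φ^h`: continuous on `[0,T]`, `φ 0 = 0`, valued in
`ℂ \ [0,∞)` on `(0,T]`, and `φ t = -t + 2∫₀ᵗ √(φ s) h'(s) ds`. -/
def IsPhiH (T : ℝ) (h : CM T) (φ : ℝ → ℂ) : Prop :=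
  ContinuousOn φ (Set.Icc 0 T) ∧ φ 0 = 0 ∧
  (∀ t ∈ Set.Ioc 0 T, offPosReal (φ t)) ∧
  ∀ t ∈ Set.Icc 0 T, φ t = -(t : ℂ) + 2 * ∫ s in Set.Ioc 0 t, upSqrt (φ s) * ((h.dFun s : ℝ) : ℂ)

/-- `d` is an (integrable) a.e. derivative of `φ` on `[0,T]`, i.e. `Re φ`, `Im φ` are
absolutely continuous with `φ t = ∫₀ᵗ d`. -/
def IsDensityOn (T : ℝ) (φ : ℝ → ℂ) (d : ℝ → ℂ) : Prop :=
  MeasureTheory.IntegrableOn d (Set.Ioc 0 T) ∧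
  ∀ t ∈ Set.Icc 0 T, φ t = ∫ s in Set.Ioc 0 t, d s

/-- The rate function `I(φ) = ∫₀ᵀ (φ'(t)+1)²/(8 φ(t)) dt` for `φ ∈ D([0,T],ℂ)`
(conditions (H1),(H2),(H3)), and `+∞` otherwise.  For any admissible density `d = φ'`,
the realness condition (H3) gives `(φ'+1)²/(8φ) = (Re((φ'+1)/(2√φ)))²/2`. -/
noncomputable def rateI (T : ℝ) (φ : ℝ → ℂ) : ENNReal :=
  ⨅ (d : ℝ → ℂ) (_ : IsDensityOn T φ d ∧
      (∀ t ∈ Set.Ioc 0 T, offPosReal (φ t)) ∧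
      (∀ᵐ t ∂(MeasureTheory.volume.restrict (Set.Ioc 0 T)),
        ((d t + 1) / (2 * upSqrt (φ t))).im = 0) ∧
      MeasureTheory.MemLp (fun t => ((d t + 1) / (2 * upSqrt (φ t))).re) 2
        (MeasureTheory.volume.restrict (Set.Ioc 0 T))),
    ∫⁻ t in Set.Ioc 0 T, ENNReal.ofReal ((((d t + 1) / (2 * upSqrt (φ t))).re) ^ 2 / 2)

/-- Riemann–Stieltjes integral `∫₀ᵀ f da` in its integration-by-parts form
`f(T)a(T) - ∫₀ᵀ a(r) f'(r) dr` (for `a 0 = 0`). -/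
noncomputable def RSint (T : ℝ) (f a : ℝ → ℝ) : ℝ :=
  f T * a T - ∫ r in Set.Ioc 0 T, a r * deriv f r

/-- The functional `J_{f,g}(ξ)`. -/
noncomputable def Jfun (T : ℝ) (f g : ℝ → ℝ) (ξ : ℝ → ℂ) : ℝ :=
  (1 / 2) * (RSint T f (fun r => (ξ r).re + r) + RSint T g (fun r => (ξ r).im)) -
    (1 / 2) * ∫ r in Set.Ioc 0 T,
      (f r ^ 2 * (‖ξ r‖ + (ξ r).re) / 2 +
        g r ^ 2 * (‖ξ r‖ - (ξ r).re) / 2 + f r * g r * (ξ r).im)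

/-- For bounded measurable `u, v` and `p, q ∈ L²([0,T],ℝ)`,
`sup_{f,g ∈ C¹} ∫₀ᵀ { fup + gvq − (fu+gv)² } dr < ∞` iff `p = q` a.e. on `{uv ≠ 0}`. -/
theorem stmt11 (T : ℝ) (hT : 0 < T) (u v p q : ℝ → ℝ)
    (hu : Measurable u) (hv : Measurable v)
    (hub : ∃ C : ℝ, ∀ t ∈ Set.Icc 0 T, |u t| ≤ C)
    (hvb : ∃ C : ℝ, ∀ t ∈ Set.Icc 0 T, |v t| ≤ C)
    (hp : MeasureTheory.MemLp p 2 (MeasureTheory.volume.restrict (Set.Ioc 0 T)))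
    (hq : MeasureTheory.MemLp q 2 (MeasureTheory.volume.restrict (Set.Ioc 0 T))) :
    BddAbove {x : ℝ | ∃ f g : ℝ → ℝ, ContDiff ℝ 1 f ∧ ContDiff ℝ 1 g ∧
        x = ∫ r in Set.Ioc 0 T,
          (f r * u r * p r + g r * v r * q r - (f r * u r + g r * v r) ^ 2)} ↔
      (∀ᵐ r ∂(MeasureTheory.volume.restrict (Set.Ioc 0 T)),
        u r * v r ≠ 0 → p r = q r) := by
  constructor
  · -- hard direction
    intro hbdd
    classical
    set μ := volume.restrict (Set.Ioc 0 T) with hμdef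
    haveI : IsFiniteMeasure μ := ⟨by rw [Measure.restrict_apply_univ]; exact measure_Ioc_lt_top⟩
    obtain ⟨Cu, hCu⟩ := hub
    obtain ⟨Cv, hCv⟩ := hvb
    have hCu0 : 0 ≤ Cu := le_trans (abs_nonneg _) (hCu 0 ⟨le_refl 0, hT.le⟩)
    have hCv0 : 0 ≤ Cv := le_trans (abs_nonneg _) (hCv 0 ⟨le_refl 0, hT.le⟩)
    have haeIcc : ∀ᵐ r ∂μ, r ∈ Set.Icc 0 T := by
      filter_upwards [ae_restrict_mem measurableSet_Ioc] with r hr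
      exact ⟨hr.1.le, hr.2⟩
    obtain ⟨B, hB⟩ := hbdd
    by_contra hne
    -- measurable versions of p and q
    set p' := hp.1.mk p with hp'def
    set q' := hq.1.mk q with hq'def
    have hp'm : Measurable p' := hp.1.stronglyMeasurable_mk.measurable
    have hq'm : Measurable q' := hq.1.stronglyMeasurable_mk.measurable
    have hpp' : p =ᵐ[μ] p' := hp.1.ae_eq_mk
    have hqq' : q =ᵐ[μ] q' := hq.1.ae_eq_mk
    have hp'2 : MemLp p' 2 μ := hp.ae_eq hpp'
    have hq'2 : MemLp q' 2 μ := hq.ae_eq hqq'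
    -- the bad set has positive measure
    have hne' : ¬ ∀ᵐ r ∂μ, u r * v r ≠ 0 → p' r = q' r := by
      intro hcon
      apply hne
      filter_upwards [hcon, hpp', hqq'] with r h1 h2 h3 hne0
      rw [h2, h3]; exact h1 hne0
    set E : Set ℝ := Set.Ioc 0 T ∩ ({r | u r * v r ≠ 0} ∩ {r | p' r - q' r ≠ 0}) with hEdef
    have huvmeas : MeasurableSet {r | u r * v r ≠ 0} :=
      ((hu.mul hv) (measurableSet_singleton (0:ℝ))).compl
    have hpqmeas : MeasurableSet {r | p' r - q' r ≠ 0} :=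
      ((hp'm.sub hq'm) (measurableSet_singleton (0:ℝ))).compl
    have hEmeas : MeasurableSet E := measurableSet_Ioc.inter (huvmeas.inter hpqmeas)
    have hEpos : μ E ≠ 0 := by
      intro hE0
      apply hne'
      rw [ae_iff]
      have hsub : {r | ¬(u r * v r ≠ 0 → p' r = q' r)} ⊆ E ∪ (Set.Ioc 0 T)ᶜ := by
        intro r hr
        rw [Set.mem_setOf_eq, Classical.not_imp] at hr
        by_cases hrT : r ∈ Set.Ioc 0 T
        · exact Or.inl ⟨hrT, hr.1, sub_ne_zero_of_ne hr.2⟩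
        · exact Or.inr hrT
      refine measure_mono_null hsub (le_antisymm ?_ zero_le)
      calc μ (E ∪ (Set.Ioc 0 T)ᶜ) ≤ μ E + μ (Set.Ioc 0 T)ᶜ := measure_union_le _ _
        _ = 0 := by
            rw [hE0, hμdef, Measure.restrict_apply (measurableSet_Ioc.compl)]
            simp
    -- slices
    set Sl : ℕ → Set ℝ := fun n => E ∩ {r | 1/(n+1 : ℝ) ≤ |u r|} ∩ {r | 1/(n+1 : ℝ) ≤ |v r|}
        ∩ {r | 1/(n+1 : ℝ) ≤ |p' r - q' r|} with hSldef
    have hSlmeas : ∀ n, MeasurableSet (Sl n) := by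
      intro n
      exact ((hEmeas.inter (measurableSet_le measurable_const hu.abs)).inter
        (measurableSet_le measurable_const hv.abs)).inter
        (measurableSet_le measurable_const (hp'm.sub hq'm).abs)
    have hEsub : E ⊆ ⋃ n, Sl n := by
      intro r hr
      obtain ⟨hr1, hr2, hr3⟩ := hr
      have hu0 : u r ≠ 0 := fun h => hr2 (by simp [h])
      have hv0 : v r ≠ 0 := fun h => hr2 (by simp [h])
      have hm0 : 0 < min (min |u r| |v r|) |p' r - q' r| := by
        simp only [lt_min_iff]
        exact ⟨⟨abs_pos.mpr hu0, abs_pos.mpr hv0⟩, abs_pos.mpr hr3⟩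
      obtain ⟨n, hn⟩ := exists_nat_one_div_lt hm0
      refine Set.mem_iUnion.mpr ⟨n, ⟨⟨⟨⟨hr1, hr2, hr3⟩, ?_⟩, ?_⟩, ?_⟩⟩
      · exact le_trans hn.le (le_trans (min_le_left _ _) (min_le_left _ _))
      · exact le_trans hn.le (le_trans (min_le_left _ _) (min_le_right _ _))
      · exact le_trans hn.le (min_le_right _ _)
    have hslice : ∃ n, μ (Sl n) ≠ 0 := by
      by_contra hall
      push_neg at hall
      exact hEpos (measure_mono_null hEsub (measure_iUnion_null hall))
    obtain ⟨n, hSn⟩ := hslice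
    set δn : ℝ := 1/(n+1 : ℝ) with hδndef
    have hδnpos : 0 < δn := by positivity
    -- the unbounded-direction functions
    set a : ℝ → ℝ := fun r => if q' r < p' r then (1:ℝ) else -1 with hadef
    have ham : Measurable a := Measurable.ite (measurableSet_lt hq'm hp'm)
      measurable_const measurable_const
    have habs : ∀ r, |a r| = 1 := by
      intro r; by_cases h : q' r < p' r <;> simp [hadef, h]
    set f₀ : ℝ → ℝ := (Sl n).indicator (fun r => a r / u r) with hf₀def
    set g₀ : ℝ → ℝ := (Sl n).indicator (fun r => -(a r) / v r) with hg₀def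
    have hf₀m : Measurable f₀ := (ham.div hu).indicator (hSlmeas n)
    have hg₀m : Measurable g₀ := (ham.neg.div hv).indicator (hSlmeas n)
    have hu0' : ∀ r ∈ Sl n, u r ≠ 0 := by
      intro r hr
      have := hr.1.1.2
      exact abs_pos.mp (lt_of_lt_of_le hδnpos this)
    have hv0' : ∀ r ∈ Sl n, v r ≠ 0 := by
      intro r hr
      have := hr.1.2
      exact abs_pos.mp (lt_of_lt_of_le hδnpos this)
    have hf₀b : ∀ r, |f₀ r| ≤ (n+1 : ℝ) := by
      intro r
      by_cases hr : r ∈ Sl n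
      · rw [hf₀def, Set.indicator_of_mem hr, abs_div, habs r]
        rw [div_le_iff₀ (abs_pos.mpr (hu0' r hr))]
        have h2 : δn ≤ |u r| := hr.1.1.2
        calc (1:ℝ) = (n+1) * δn := by rw [hδndef]; field_simp
          _ ≤ (n+1) * |u r| := by
              apply mul_le_mul_of_nonneg_left h2 (by positivity)
      · rw [hf₀def, Set.indicator_of_notMem hr]; simp; positivity
    have hg₀b : ∀ r, |g₀ r| ≤ (n+1 : ℝ) := by
      intro r
      by_cases hr : r ∈ Sl n
      · rw [hg₀def, Set.indicator_of_mem hr, abs_div, abs_neg, habs r]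
        rw [div_le_iff₀ (abs_pos.mpr (hv0' r hr))]
        have h2 : δn ≤ |v r| := hr.1.2
        calc (1:ℝ) = (n+1) * δn := by rw [hδndef]; field_simp
          _ ≤ (n+1) * |v r| := by
              apply mul_le_mul_of_nonneg_left h2 (by positivity)
      · rw [hg₀def, Set.indicator_of_notMem hr]; simp; positivity
    have hf₀supp : ∀ r, r ∉ Set.Ioc 0 T → f₀ r = 0 := by
      intro r hr
      rw [hf₀def, Set.indicator_of_notMem (fun hmem => hr hmem.1.1.1.1)]
    have hg₀supp : ∀ r, r ∉ Set.Ioc 0 T → g₀ r = 0 := by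
      intro r hr
      rw [hg₀def, Set.indicator_of_notMem (fun hmem => hr hmem.1.1.1.1)]
    -- key pointwise identities
    have id1 : ∀ r, f₀ r * u r + g₀ r * v r = 0 := by
      intro r
      by_cases hr : r ∈ Sl n
      · rw [hf₀def, hg₀def, Set.indicator_of_mem hr, Set.indicator_of_mem hr,
          div_mul_cancel₀ _ (hu0' r hr), div_mul_cancel₀ _ (hv0' r hr)]
        ring
      · rw [hf₀def, hg₀def, Set.indicator_of_notMem hr, Set.indicator_of_notMem hr]; ring
    have id2 : ∀ r, f₀ r * u r * p' r + g₀ r * v r * q' r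
        = (Sl n).indicator (fun r => |p' r - q' r|) r := by
      intro r
      by_cases hr : r ∈ Sl n
      · rw [hf₀def, hg₀def, Set.indicator_of_mem hr, Set.indicator_of_mem hr,
          Set.indicator_of_mem hr, div_mul_cancel₀ _ (hu0' r hr), div_mul_cancel₀ _ (hv0' r hr)]
        have hne0 : p' r - q' r ≠ 0 := hr.1.1.1.2.2
        by_cases hlt : q' r < p' r
        · rw [hadef]; simp only [hlt, if_true]
          rw [abs_of_pos (sub_pos.mpr hlt)]; ring
        · have hlt' : p' r < q' r := lt_of_le_of_ne (not_lt.mp hlt) (fun h => hne0 (by rw[h]; ring))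
          rw [hadef]; simp only [hlt, if_false]
          rw [abs_of_neg (sub_neg.mpr hlt')]; ring
      · rw [hf₀def, hg₀def, Set.indicator_of_notMem hr, Set.indicator_of_notMem hr,
          Set.indicator_of_notMem hr]
        ring
    -- the constant c
    have hInt_pq : Integrable (fun r => |p' r - q' r|) μ :=
      ((hp'2.sub hq'2).integrable one_le_two).abs
    have hc_int : Integrable (fun r => (Sl n).indicator (fun r => |p' r - q' r|) r) μ :=
      hInt_pq.indicator (hSlmeas n)
    set c : ℝ := ∫ r, (Sl n).indicator (fun r => |p' r - q' r|) r ∂μ with hcdef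
    have hc : 0 < c := by
      have h1 : c = ∫ r in Sl n, |p' r - q' r| ∂μ := by
        rw [hcdef, integral_indicator (hSlmeas n)]
      have h2 : ∫ r in Sl n, δn ∂μ ≤ ∫ r in Sl n, |p' r - q' r| ∂μ := by
        refine setIntegral_mono_on (integrable_const δn).integrableOn
          hInt_pq.integrableOn (hSlmeas n) ?_
        intro r hr
        exact hr.2
      have h3 : ∫ r in Sl n, δn ∂μ = (μ (Sl n)).toReal * δn := by
        rw [setIntegral_const, smul_eq_mul]; rfl
      have h4 : 0 < (μ (Sl n)).toReal := ENNReal.toReal_pos hSn (measure_ne_top μ _)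
      rw [h1]
      calc (0:ℝ) < (μ (Sl n)).toReal * δn := by positivity
        _ = ∫ r in Sl n, δn ∂μ := h3.symm
        _ ≤ _ := h2
    -- constants
    set K : ℝ := max B 0 + 1 with hKdef
    have hKmax : (0:ℝ) ≤ max B 0 := le_max_right B 0
    have hK : 0 < K := by rw [hKdef]; linarith
    have hKB : B < K := by
      have := le_max_left B 0
      rw [hKdef]; linarith
    set lam : ℝ := 4 * K / c with hlamdef
    have hlam : 0 < lam := by positivity
    have hup2 : MemLp (fun r => u r * p' r) 2 μ := by
      refine hp'2.of_le_mul (c := Cu) (hu.mul hp'm).aestronglyMeasurable ?_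
      filter_upwards [haeIcc] with r hr
      rw [Real.norm_eq_abs, Real.norm_eq_abs, abs_mul]
      exact mul_le_mul_of_nonneg_right (hCu r hr) (abs_nonneg _)
    have hvq2 : MemLp (fun r => v r * q' r) 2 μ := by
      refine hq'2.of_le_mul (c := Cv) (hv.mul hq'm).aestronglyMeasurable ?_
      filter_upwards [haeIcc] with r hr
      rw [Real.norm_eq_abs, Real.norm_eq_abs, abs_mul]
      exact mul_le_mul_of_nonneg_right (hCv r hr) (abs_nonneg _)
    set P2 : ℝ := ∫ r, (u r * p' r) ^ 2 ∂μ with hP2def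
    set Q2 : ℝ := ∫ r, (v r * q' r) ^ 2 ∂μ with hQ2def
    have hP2i : Integrable (fun r => (u r * p' r) ^ 2) μ := hup2.integrable_sq
    have hQ2i : Integrable (fun r => (v r * q' r) ^ 2) μ := hvq2.integrable_sq
    have hP2nn : 0 ≤ P2 := integral_nonneg (fun r => sq_nonneg _)
    have hQ2nn : 0 ≤ Q2 := integral_nonneg (fun r => sq_nonneg _)
    set s : ℝ := c / (2 * (P2 + Q2) + 2) with hsdef
    have hs : 0 < s := div_pos hc (by nlinarith)
    set ε : ℝ := min (s * c / 4) (K / (4 * lam ^ 2 * (Cu ^ 2 + Cv ^ 2) + 1)) with hεdef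
    have hεpos : 0 < ε := lt_min (by positivity) (by positivity)
    obtain ⟨f, hfc1, hDfle⟩ := exists_c1_close T hT f₀ hf₀m (n+1) hf₀b hf₀supp hεpos
    obtain ⟨g, hgc1, hDgle⟩ := exists_c1_close T hT g₀ hg₀m (n+1) hg₀b hg₀supp hεpos
    rw [← hμdef] at hDfle hDgle
    set Df : ℝ := ∫ r, (f r - f₀ r) ^ 2 ∂μ with hDfdef
    set Dg : ℝ := ∫ r, (g r - g₀ r) ^ 2 ∂μ with hDgdef
    have hDfnn : 0 ≤ Df := integral_nonneg (fun r => sq_nonneg _)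
    have hDgnn : 0 ≤ Dg := integral_nonneg (fun r => sq_nonneg _)
    -- bounds for f, g
    obtain ⟨Cf, hCf⟩ := isCompact_Icc.exists_bound_of_continuousOn
      (f := f) (s := Set.Icc (0:ℝ) T) hfc1.continuous.continuousOn
    obtain ⟨Cg, hCg⟩ := isCompact_Icc.exists_bound_of_continuousOn
      (f := g) (s := Set.Icc (0:ℝ) T) hgc1.continuous.continuousOn
    have hfm : Measurable f := hfc1.continuous.measurable
    have hgm : Measurable g := hgc1.continuous.measurable
    -- integrability facts
    have hp'I : Integrable p' μ := hp'2.integrable one_le_two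
    have hq'I : Integrable q' μ := hq'2.integrable one_le_two
    have Iup : Integrable (fun r => u r * p' r) μ := hup2.integrable one_le_two
    have Ivq : Integrable (fun r => v r * q' r) μ := hvq2.integrable one_le_two
    have Ifup : Integrable (fun r => f r * u r * p' r) μ := by
      refine hp'I.bdd_mul (c := Cf * Cu) ((hfm.mul hu).aestronglyMeasurable) ?_
      filter_upwards [haeIcc] with r hr
      rw [Real.norm_eq_abs, abs_mul]
      exact mul_le_mul (hCf r hr) (hCu r hr) (abs_nonneg _) (le_trans (norm_nonneg _) (hCf r hr))
    have Igvq : Integrable (fun r => g r * v r * q' r) μ := by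
      refine hq'I.bdd_mul (c := Cg * Cv) ((hgm.mul hv).aestronglyMeasurable) ?_
      filter_upwards [haeIcc] with r hr
      rw [Real.norm_eq_abs, abs_mul]
      exact mul_le_mul (hCg r hr) (hCv r hr) (abs_nonneg _) (le_trans (norm_nonneg _) (hCg r hr))
    have Ifd : Integrable (fun r => (f r - f₀ r) * (u r * p' r)) μ := by
      refine Iup.bdd_mul (c := Cf + (n+1)) ((hfm.sub hf₀m).aestronglyMeasurable) ?_
      filter_upwards [haeIcc] with r hr
      rw [Real.norm_eq_abs]
      calc |f r - f₀ r| ≤ |f r| + |f₀ r| := abs_sub _ _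
        _ ≤ Cf + (n+1) := add_le_add (hCf r hr) (hf₀b r)
    have Igd : Integrable (fun r => (g r - g₀ r) * (v r * q' r)) μ := by
      refine Ivq.bdd_mul (c := Cg + (n+1)) ((hgm.sub hg₀m).aestronglyMeasurable) ?_
      filter_upwards [haeIcc] with r hr
      rw [Real.norm_eq_abs]
      calc |g r - g₀ r| ≤ |g r| + |g₀ r| := abs_sub _ _
        _ ≤ Cg + (n+1) := add_le_add (hCg r hr) (hg₀b r)
    have IDf : Integrable (fun r => (f r - f₀ r) ^ 2) μ := by
      refine ⟨((hfm.sub hf₀m).pow_const 2).aestronglyMeasurable,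
        HasFiniteIntegral.of_bounded (C := (Cf + (n+1)) ^ 2) ?_⟩
      filter_upwards [haeIcc] with r hr
      rw [Real.norm_eq_abs, abs_of_nonneg (sq_nonneg _)]
      have h1 : |f r - f₀ r| ≤ Cf + (n+1) := by
        calc |f r - f₀ r| ≤ |f r| + |f₀ r| := abs_sub _ _
          _ ≤ Cf + (n+1) := add_le_add (hCf r hr) (hf₀b r)
      exact sq_le_sq' (by linarith [neg_abs_le (f r - f₀ r)]) (by linarith [le_abs_self (f r - f₀ r)])
    have IDg : Integrable (fun r => (g r - g₀ r) ^ 2) μ := by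
      refine ⟨((hgm.sub hg₀m).pow_const 2).aestronglyMeasurable,
        HasFiniteIntegral.of_bounded (C := (Cg + (n+1)) ^ 2) ?_⟩
      filter_upwards [haeIcc] with r hr
      rw [Real.norm_eq_abs, abs_of_nonneg (sq_nonneg _)]
      have h1 : |g r - g₀ r| ≤ Cg + (n+1) := by
        calc |g r - g₀ r| ≤ |g r| + |g₀ r| := abs_sub _ _
          _ ≤ Cg + (n+1) := add_le_add (hCg r hr) (hg₀b r)
      exact sq_le_sq' (by linarith [neg_abs_le (g r - g₀ r)]) (by linarith [le_abs_self (g r - g₀ r)])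
    have IQ : Integrable (fun r => (f r * u r + g r * v r) ^ 2) μ := by
      refine ⟨(((hfm.mul hu).add (hgm.mul hv)).pow_const 2).aestronglyMeasurable,
        HasFiniteIntegral.of_bounded (C := (Cf * Cu + Cg * Cv) ^ 2) ?_⟩
      filter_upwards [haeIcc] with r hr
      rw [Real.norm_eq_abs, abs_of_nonneg (sq_nonneg _)]
      have h1 : |f r * u r + g r * v r| ≤ Cf * Cu + Cg * Cv := by
        calc |f r * u r + g r * v r| ≤ |f r * u r| + |g r * v r| := abs_add_le _ _
          _ ≤ Cf * Cu + Cg * Cv := by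
              rw [abs_mul, abs_mul]
              exact add_le_add
                (mul_le_mul (hCf r hr) (hCu r hr) (abs_nonneg _) (le_trans (norm_nonneg _) (hCf r hr)))
                (mul_le_mul (hCg r hr) (hCv r hr) (abs_nonneg _) (le_trans (norm_nonneg _) (hCg r hr)))
      exact sq_le_sq' (by linarith [neg_abs_le (f r * u r + g r * v r)])
        (by linarith [le_abs_self (f r * u r + g r * v r)])
    -- L and its lower bound
    set L : ℝ := ∫ r, (f r * u r * p' r + g r * v r * q' r) ∂μ with hLdef
    have Isum : Integrable (fun r => f r * u r * p' r + g r * v r * q' r) μ := Ifup.add Igvq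
    have hLc : L - c = ∫ r, ((f r - f₀ r) * (u r * p' r) + (g r - g₀ r) * (v r * q' r)) ∂μ := by
      rw [hLdef, hcdef, ← integral_sub Isum hc_int]
      apply integral_congr_ae
      apply Eventually.of_forall
      intro r
      linear_combination id2 r
    have hLlow : c / 2 ≤ L := by
      have habs : |L - c| ≤ Df / (2*s) + s * P2 / 2 + (Dg / (2*s) + s * Q2 / 2) := by
        rw [hLc]
        have J1 : Integrable (fun r => (f r - f₀ r) ^ 2 / (2*s)) μ := IDf.div_const _
        have J2 : Integrable (fun r => s * (u r * p' r) ^ 2 / 2) μ := (hP2i.const_mul s).div_const 2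
        have J3 : Integrable (fun r => (g r - g₀ r) ^ 2 / (2*s)) μ := IDg.div_const _
        have J4 : Integrable (fun r => s * (v r * q' r) ^ 2 / 2) μ := (hQ2i.const_mul s).div_const 2
        have J12 : Integrable (fun r => (f r - f₀ r) ^ 2 / (2*s) + s * (u r * p' r) ^ 2 / 2) μ :=
          J1.add J2
        have J34 : Integrable (fun r => (g r - g₀ r) ^ 2 / (2*s) + s * (v r * q' r) ^ 2 / 2) μ :=
          J3.add J4
        calc |∫ r, ((f r - f₀ r) * (u r * p' r) + (g r - g₀ r) * (v r * q' r)) ∂μ|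
            ≤ ∫ r, |(f r - f₀ r) * (u r * p' r) + (g r - g₀ r) * (v r * q' r)| ∂μ := by
              simpa [Real.norm_eq_abs] using norm_integral_le_integral_norm
                (fun r => (f r - f₀ r) * (u r * p' r) + (g r - g₀ r) * (v r * q' r)) (μ := μ)
          _ ≤ ∫ r, (((f r - f₀ r) ^ 2 / (2*s) + s * (u r * p' r) ^ 2 / 2)
                + ((g r - g₀ r) ^ 2 / (2*s) + s * (v r * q' r) ^ 2 / 2)) ∂μ := by
              refine integral_mono (Ifd.add Igd).abs (J12.add J34) ?_
              intro r
              calc |(f r - f₀ r) * (u r * p' r) + (g r - g₀ r) * (v r * q' r)|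
                  ≤ |(f r - f₀ r) * (u r * p' r)| + |(g r - g₀ r) * (v r * q' r)| := abs_add_le _ _
                _ ≤ _ := add_le_add (amgm_abs _ _ s hs) (amgm_abs _ _ s hs)
          _ = Df / (2*s) + s * P2 / 2 + (Dg / (2*s) + s * Q2 / 2) := by
              rw [integral_add J12 J34, integral_add J1 J2, integral_add J3 J4,
                integral_div, integral_div, integral_div, integral_div,
                integral_const_mul, integral_const_mul]
      have hb1 : Df / (2*s) + Dg / (2*s) ≤ c / 4 := by
        have h1 : Df ≤ s * c / 4 := le_trans hDfle (min_le_left _ _)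
        have h2 : Dg ≤ s * c / 4 := le_trans hDgle (min_le_left _ _)
        rw [← add_div, div_le_iff₀ (by positivity)]
        nlinarith
      have hb2 : s * P2 / 2 + s * Q2 / 2 ≤ c / 4 := by
        have h1 : s * (2 * (P2 + Q2) + 2) = c := by
          rw [hsdef]; field_simp
        nlinarith [hs]
      have habs2 : |L - c| ≤ c / 2 := by linarith
      have := abs_le.mp habs2
      linarith [this.1]
    -- Q and its upper bound
    set Qv : ℝ := ∫ r, (f r * u r + g r * v r) ^ 2 ∂μ with hQvdef
    have hQnn : 0 ≤ Qv := integral_nonneg (fun r => sq_nonneg _)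
    have hQle : Qv ≤ 2 * Cu ^ 2 * Df + 2 * Cv ^ 2 * Dg := by
      have J5 : Integrable (fun r => 2 * Cu ^ 2 * (f r - f₀ r) ^ 2) μ := IDf.const_mul _
      have J6 : Integrable (fun r => 2 * Cv ^ 2 * (g r - g₀ r) ^ 2) μ := IDg.const_mul _
      have hmono : Qv ≤ ∫ r, (2 * Cu ^ 2 * (f r - f₀ r) ^ 2 + 2 * Cv ^ 2 * (g r - g₀ r) ^ 2) ∂μ := by
        refine integral_mono_ae IQ (J5.add J6) ?_
        filter_upwards [haeIcc] with r hr
        have e0 : f r * u r + g r * v r = (f r - f₀ r) * u r + (g r - g₀ r) * v r := by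
          linear_combination id1 r
        have hu2 : u r ^ 2 ≤ Cu ^ 2 := by
          nlinarith [hCu r hr, abs_nonneg (u r), sq_abs (u r)]
        have hv2 : v r ^ 2 ≤ Cv ^ 2 := by
          nlinarith [hCv r hr, abs_nonneg (v r), sq_abs (v r)]
        rw [e0]
        nlinarith [sq_nonneg ((f r - f₀ r) * u r - (g r - g₀ r) * v r),
          mul_le_mul_of_nonneg_left hu2 (sq_nonneg (f r - f₀ r)),
          mul_le_mul_of_nonneg_left hv2 (sq_nonneg (g r - g₀ r))]
      rw [integral_add J5 J6, integral_const_mul, integral_const_mul] at hmono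
      exact hmono
    have hlamQ : lam ^ 2 * Qv ≤ K := by
      have h1 : Qv ≤ 2 * (Cu ^ 2 + Cv ^ 2) * ε := by
        nlinarith [hDfle, hDgle, hεpos, sq_nonneg Cu, sq_nonneg Cv, hDfnn, hDgnn]
      have h2 : ε ≤ K / (4 * lam ^ 2 * (Cu ^ 2 + Cv ^ 2) + 1) := min_le_right _ _
      have h3 : ε * (4 * lam ^ 2 * (Cu ^ 2 + Cv ^ 2) + 1) ≤ K := by
        rw [le_div_iff₀ (by positivity)] at h2
        linarith
      nlinarith [sq_nonneg lam, hεpos, sq_nonneg Cu, sq_nonneg Cv, hQnn,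
        mul_le_mul_of_nonneg_left h1 (sq_nonneg lam)]
    -- the element of the set
    set x : ℝ := ∫ r, ((lam * f r) * u r * p r + (lam * g r) * v r * q r
        - ((lam * f r) * u r + (lam * g r) * v r) ^ 2) ∂μ with hxdef
    have hxval : x = lam * L - lam ^ 2 * Qv := by
      have e1 : x = ∫ r, (lam * (f r * u r * p' r + g r * v r * q' r)
          - lam ^ 2 * ((f r * u r + g r * v r) ^ 2)) ∂μ := by
        rw [hxdef]
        apply integral_congr_ae
        filter_upwards [hpp', hqq'] with r h1 h2
        rw [h1, h2]; ring
      have J7 : Integrable (fun r => lam * (f r * u r * p' r + g r * v r * q' r)) μ :=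
        Isum.const_mul lam
      have J8 : Integrable (fun r => lam ^ 2 * ((f r * u r + g r * v r) ^ 2)) μ := IQ.const_mul _
      rw [e1, integral_sub J7 J8, integral_const_mul, integral_const_mul]
    have hxmem : x ≤ B := by
      refine hB ⟨fun r => lam * f r, fun r => lam * g r,
        contDiff_const.mul hfc1, contDiff_const.mul hgc1, ?_⟩
      rw [hxdef, hμdef]
    have hxge : K ≤ x := by
      rw [hxval]
      have h1 : lam * (c / 2) = 2 * K := by
        rw [hlamdef]; field_simp; ring
      have h2 : 2 * K ≤ lam * L := by
        rw [← h1]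
        exact mul_le_mul_of_nonneg_left hLlow hlam.le
      linarith
    linarith
  · -- easy direction
    intro hae
    classical
    set μ := volume.restrict (Set.Ioc 0 T) with hμdef
    haveI : IsFiniteMeasure μ := ⟨by rw [Measure.restrict_apply_univ]; exact measure_Ioc_lt_top⟩
    obtain ⟨Cu, hCu⟩ := hub
    obtain ⟨Cv, hCv⟩ := hvb
    have haeIcc : ∀ᵐ r ∂μ, r ∈ Set.Icc 0 T := by
      filter_upwards [ae_restrict_mem measurableSet_Ioc] with r hr
      exact ⟨hr.1.le, hr.2⟩
    refine ⟨∫ r, (p r ^ 2 + q r ^ 2) / 4 ∂μ, ?_⟩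
    rintro x ⟨f, g, hf, hg, rfl⟩
    obtain ⟨Cf, hCf⟩ := isCompact_Icc.exists_bound_of_continuousOn
      (f := f) (s := Set.Icc (0:ℝ) T) hf.continuous.continuousOn
    obtain ⟨Cg, hCg⟩ := isCompact_Icc.exists_bound_of_continuousOn
      (f := g) (s := Set.Icc (0:ℝ) T) hg.continuous.continuousOn
    have hpi : Integrable p μ := hp.integrable one_le_two
    have hqi : Integrable q μ := hq.integrable one_le_two
    have hfu : AEStronglyMeasurable (fun r => f r * u r) μ :=
      (hf.continuous.measurable.mul hu).aestronglyMeasurable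
    have hgv : AEStronglyMeasurable (fun r => g r * v r) μ :=
      (hg.continuous.measurable.mul hv).aestronglyMeasurable
    have hfub : ∀ᵐ r ∂μ, ‖f r * u r‖ ≤ Cf * Cu := by
      filter_upwards [haeIcc] with r hr
      rw [Real.norm_eq_abs, abs_mul]
      exact mul_le_mul (hCf r hr) (hCu r hr) (abs_nonneg _)
        (le_trans (norm_nonneg _) (hCf r hr))
    have hgvb : ∀ᵐ r ∂μ, ‖g r * v r‖ ≤ Cg * Cv := by
      filter_upwards [haeIcc] with r hr
      rw [Real.norm_eq_abs, abs_mul]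
      exact mul_le_mul (hCg r hr) (hCv r hr) (abs_nonneg _)
        (le_trans (norm_nonneg _) (hCg r hr))
    have I1 : Integrable (fun r => f r * u r * p r) μ := hpi.bdd_mul hfu hfub
    have I2 : Integrable (fun r => g r * v r * q r) μ := hqi.bdd_mul hgv hgvb
    have I3 : Integrable (fun r => (f r * u r + g r * v r) ^ 2) μ := by
      refine ⟨((hfu.add hgv).mul (hfu.add hgv)).congr
        (Filter.Eventually.of_forall fun r => by simp [sq]), ?_⟩
      refine HasFiniteIntegral.of_bounded (C := (Cf * Cu + Cg * Cv) ^ 2) ?_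
      filter_upwards [hfub, hgvb] with r h1 h2
      have h3 : |f r * u r + g r * v r| ≤ Cf * Cu + Cg * Cv := by
        calc |f r * u r + g r * v r| ≤ |f r * u r| + |g r * v r| := abs_add_le _ _
          _ ≤ Cf * Cu + Cg * Cv := by
              rw [Real.norm_eq_abs] at h1 h2; exact add_le_add h1 h2
      rw [Real.norm_eq_abs, abs_of_nonneg (sq_nonneg _)]
      nlinarith [abs_nonneg (f r * u r + g r * v r), sq_abs (f r * u r + g r * v r)]
    refine integral_mono_ae ((I1.add I2).sub I3) ((hp.integrable_sq.add hq.integrable_sq).div_const 4) ?_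
    filter_upwards [hae] with r hpq
    by_cases hu0 : u r = 0
    · simp only [hu0, mul_zero, zero_mul, zero_add]
      nlinarith [sq_nonneg (g r * v r - q r / 2), sq_nonneg (p r)]
    by_cases hv0 : v r = 0
    · simp only [hv0, mul_zero, zero_mul, add_zero]
      nlinarith [sq_nonneg (f r * u r - p r / 2), sq_nonneg (q r)]
    · have hpq' := hpq (mul_ne_zero hu0 hv0)
      rw [hpq']
      nlinarith [sq_nonneg (f r * u r + g r * v r - q r / 2), sq_nonneg (q r - q r), sq_nonneg (p r - q r)]
end

section
/- Let T > 0 and φ ∈ C₀([0,T],ℂ). Assume that sup over f ∈ C¹([0,T],ℝ) of J_{f,0}(φ) is finite and sup over g ∈ C¹([0,T],ℝ) of J_{0,g}(φ) is finite. Then Re φ and Im φ are absolutely continuous, and there exist measurable functions k, l: [0,T] → ℝ such that ∫₀^T k(r)²(|φ(r)| + Re φ(r)) dr + ∫₀^T l(r)²(|φ(r)| − Re φ(r)) dr < ∞, and for Lebesgue-almost every t: Re φ'(t) + 1 = (1/2) k(t)(|φ(t)| + Re φ(t)) and Im φ'(t) = (1/2) l(t)(|φ(t)| − Re φ(t)).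 -/
set_option maxHeartbeats 1000000


open MeasureTheory Set Filter
open scoped RealInnerProductSpace

lemma RSint_smul (T c : ℝ) (f a : ℝ → ℝ) (hf : ContDiff ℝ 1 f) :
    RSint T (fun r => c * f r) a = c * RSint T f a := by
  unfold RSint
  have hd : ∀ r, deriv (fun x => c * f x) r = c * deriv f r :=
    fun r => deriv_const_mul c ((hf.differentiable one_ne_zero) r)
  simp_rw [hd]
  have : ∀ r, a r * (c * deriv f r) = c * (a r * deriv f r) := fun r => by ring
  simp_rw [this, integral_const_mul]
  ring

lemma Qscale (T c : ℝ) (f w : ℝ → ℝ) :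
    (∫ r in Set.Ioc 0 T, (c * f r) ^ 2 * w r) = c ^ 2 * ∫ r in Set.Ioc 0 T, f r ^ 2 * w r := by
  have : ∀ r, (c * f r) ^ 2 * w r = c ^ 2 * (f r ^ 2 * w r) := fun r => by ring
  simp_rw [this, integral_const_mul]

lemma key_bound (T : ℝ) (a w : ℝ → ℝ)
    (hw0 : ∀ r ∈ Set.Ioc 0 T, 0 ≤ w r)
    (hbdd : BddAbove {x : ℝ | ∃ f : ℝ → ℝ, ContDiff ℝ 1 f ∧
      x = (1/2) * RSint T f a - (1/4) * ∫ r in Set.Ioc 0 T, f r ^ 2 * w r}) :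
    ∃ M : ℝ, 0 ≤ M ∧ ∀ f : ℝ → ℝ, ContDiff ℝ 1 f →
      (RSint T f a) ^ 2 ≤ M * ∫ r in Set.Ioc 0 T, f r ^ 2 * w r := by
  obtain ⟨M, hM⟩ := hbdd
  have hMem : ∀ f : ℝ → ℝ, ContDiff ℝ 1 f →
      (1/2) * RSint T f a - (1/4) * (∫ r in Set.Ioc 0 T, f r ^ 2 * w r) ≤ M := by
    intro f hf
    exact hM ⟨f, hf, rfl⟩
  have hM0 : 0 ≤ M := by
    have h0 := hMem (fun _ => 0) contDiff_const
    simpa [RSint] using h0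
  refine ⟨4 * M, by linarith, ?_⟩
  intro f hf
  set R := RSint T f a with hR
  set Q := ∫ r in Set.Ioc 0 T, f r ^ 2 * w r with hQ
  have hQ0 : 0 ≤ Q := by
    apply MeasureTheory.setIntegral_nonneg measurableSet_Ioc
    intro r hr
    exact mul_nonneg (sq_nonneg _) (hw0 r hr)
  have hlam : ∀ c : ℝ, (1/2) * (c * R) - (1/4) * (c ^ 2 * Q) ≤ M := by
    intro c
    have := hMem (fun r => c * f r) (hf.const_smul c)
    rwa [RSint_smul T c f a hf, Qscale T c f w] at this
  rcases eq_or_lt_of_le hQ0 with hQz | hQp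
  · have hRz : R = 0 := by
      by_contra hR0
      have h1 := hlam ((2 * M + 1) / R)
      rw [← hQz] at h1
      rw [div_mul_cancel₀ _ hR0] at h1
      simp only [mul_zero, sub_zero] at h1
      rcases abs_cases R with ⟨h, _⟩ | ⟨h, _⟩ <;> nlinarith [abs_pos.mpr hR0]
    rw [hRz, ← hQz]; ring_nf; rfl
  · have h1 := hlam (R / Q)
    have hQne : Q ≠ 0 := ne_of_gt hQp
    have e1 : 1/2 * (R/Q*R) - 1/4 * ((R/Q)^2*Q) = R^2 / (4*Q) := by
      field_simp; ring
    rw [e1] at h1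
    have := (div_le_iff₀ (by positivity : (0:ℝ) < 4*Q)).mp h1
    linarith

lemma coreRep (T : ℝ) (hT : 0 < T) (a w : ℝ → ℝ)
    (ha : ContinuousOn a (Set.Icc 0 T)) (ha0 : a 0 = 0)
    (hw : ContinuousOn w (Set.Icc 0 T)) (hw0 : ∀ r ∈ Set.Icc 0 T, 0 ≤ w r)
    (M : ℝ) (hM0 : 0 ≤ M)
    (hkey : ∀ f : ℝ → ℝ, ContDiff ℝ 1 f →
      (RSint T f a) ^ 2 ≤ M * ∫ r in Set.Ioc 0 T, f r ^ 2 * w r) :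
    ∃ h w₀ : ℝ → ℝ, Measurable h ∧ Measurable w₀ ∧ (∀ r, 0 ≤ w₀ r) ∧
      (w₀ =ᵐ[volume.restrict (Set.Ioc 0 T)] w) ∧
      Integrable (fun r => h r * w₀ r) (volume.restrict (Set.Ioc 0 T)) ∧
      Integrable (fun r => w₀ r * h r ^ 2) (volume.restrict (Set.Ioc 0 T)) ∧
      (∀ f : ℝ → ℝ, ContDiff ℝ 1 f →
        RSint T f a = ∫ r in Set.Ioc 0 T, f r * (h r * w₀ r)) := by
  set ν := volume.restrict (Set.Ioc 0 T) with hν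
  have hwae : AEMeasurable w ν :=
    ContinuousOn.aemeasurable (hw.mono Set.Ioc_subset_Icc_self) measurableSet_Ioc
  set w₀ : ℝ → ℝ := fun r => max (hwae.mk w r) 0 with hw₀def
  have hw₀meas : Measurable w₀ := hwae.measurable_mk.max measurable_const
  have hw₀nn : ∀ r, 0 ≤ w₀ r := fun r => le_max_right _ _
  have hw0ae : ∀ᵐ r ∂ν, 0 ≤ w r :=
    (ae_restrict_iff' measurableSet_Ioc).2
      (Eventually.of_forall fun r hr => hw0 r (Set.Ioc_subset_Icc_self hr))
  have hww₀ : w₀ =ᵐ[ν] w := by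
    filter_upwards [hwae.ae_eq_mk, hw0ae] with r h1 h2
    rw [hw₀def]; simp only [← h1]; exact max_eq_left h2
  set dens : ℝ → NNReal := fun r => Real.toNNReal (w₀ r) with hdensdef
  have hdens : Measurable dens := hw₀meas.real_toNNReal
  set μ := ν.withDensity (fun r => (dens r : ENNReal)) with hμ
  have hμfin : IsFiniteMeasure μ := by
    obtain ⟨C, hC⟩ := IsCompact.exists_bound_of_continuousOn isCompact_Icc hw
    apply isFiniteMeasure_withDensity
    have hb : ∀ᵐ r ∂ν, (dens r : ENNReal) ≤ ENNReal.ofReal C := by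
      filter_upwards [hww₀, ae_restrict_mem measurableSet_Ioc] with r h1 h2
      have h3 : w₀ r ≤ C := by
        rw [h1]
        exact (le_abs_self _).trans (hC r (Set.Ioc_subset_Icc_self h2))
      exact ENNReal.ofReal_le_ofReal h3
    have h4 : (∫⁻ r, (dens r : ENNReal) ∂ν) ≤ ENNReal.ofReal C * ν Set.univ := by
      calc (∫⁻ r, (dens r : ENNReal) ∂ν) ≤ ∫⁻ _, ENNReal.ofReal C ∂ν := lintegral_mono_ae hb
      _ = ENNReal.ofReal C * ν Set.univ := by rw [lintegral_const]
    refine ne_top_of_le_ne_top ?_ h4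
    have : ν Set.univ = volume (Set.Ioc (0:ℝ) T) := by
      rw [hν, Measure.restrict_apply_univ]
    rw [this, Real.volume_Ioc]
    exact ENNReal.mul_ne_top ENNReal.ofReal_ne_top ENNReal.ofReal_ne_top
  have hac : μ ≪ ν := withDensity_absolutelyContinuous ν _
  have hmem : ∀ f : ℝ → ℝ, Continuous f → MemLp f 2 μ := by
    intro f hf
    obtain ⟨C, hC⟩ := IsCompact.exists_bound_of_continuousOn (isCompact_Icc (a := (0:ℝ)) (b := T))
      hf.continuousOn
    refine MemLp.of_bound hf.aestronglyMeasurable C ?_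
    refine Eventually.filter_mono hac.ae_le ?_
    refine (ae_restrict_iff' measurableSet_Ioc).2 ?_
    exact Eventually.of_forall fun r hr => hC r (Set.Ioc_subset_Icc_self hr)
  have hinta : ∀ f : ℝ → ℝ, ContDiff ℝ 1 f →
      IntegrableOn (fun r => a r * deriv f r) (Set.Ioc 0 T) := by
    intro f hf
    exact ((ha.mul (hf.continuous_deriv le_rfl).continuousOn).integrableOn_compact
      isCompact_Icc).mono_set Set.Ioc_subset_Icc_self
  let V : Submodule ℝ (ℝ → ℝ) :=
    { carrier := {f | ContDiff ℝ 1 f}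
      add_mem' := by
        intro f g hf hg
        rw [Set.mem_setOf_eq] at *
        exact hf.add hg
      zero_mem' := by
        rw [Set.mem_setOf_eq]
        exact contDiff_const
      smul_mem' := by
        intro c f hf
        rw [Set.mem_setOf_eq] at *
        exact hf.const_smul c }
  have hVmem : ∀ f : V, ContDiff ℝ 1 (f : ℝ → ℝ) := fun f => f.2
  let Lmap : V →ₗ[ℝ] ℝ :=
    { toFun := fun f => RSint T (f : ℝ → ℝ) a
      map_add' := by
        intro f g
        show RSint T ((f : ℝ → ℝ) + (g : ℝ → ℝ)) a
          = RSint T (f : ℝ → ℝ) a + RSint T (g : ℝ → ℝ) a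
        unfold RSint
        have hdf := ((hVmem f).differentiable one_ne_zero)
        have hdg := ((hVmem g).differentiable one_ne_zero)
        have hd : ∀ r, deriv ((f : ℝ → ℝ) + (g : ℝ → ℝ)) r
            = deriv (f : ℝ → ℝ) r + deriv (g : ℝ → ℝ) r :=
          fun r => deriv_add (hdf r) (hdg r)
        simp_rw [hd]
        rw [show (fun r => a r * (deriv (f : ℝ → ℝ) r + deriv (g : ℝ → ℝ) r))
            = fun r => a r * deriv (f : ℝ → ℝ) r + a r * deriv (g : ℝ → ℝ) r
            from funext fun r => by ring]
        rw [integral_add (hinta _ f.2) (hinta _ g.2)]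
        simp [Pi.add_apply]; ring
      map_smul' := by
        intro c f
        show RSint T (c • (f : ℝ → ℝ)) a = c • RSint T (f : ℝ → ℝ) a
        have h1 : (c • (f : ℝ → ℝ) : ℝ → ℝ) = fun r => c * (f : ℝ → ℝ) r := rfl
        rw [h1, RSint_smul T c (f : ℝ → ℝ) a f.2]
        rfl }
  let Tmap : V →ₗ[ℝ] Lp ℝ 2 μ :=
    { toFun := fun f => MemLp.toLp (f : ℝ → ℝ) (hmem _ (hVmem f).continuous)
      map_add' := by
        intro f g
        exact MemLp.toLp_add _ _
      map_smul' := by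
        intro c f
        simp only [RingHom.id_apply]
        exact MemLp.toLp_const_smul c _ }
  have hcoe : ∀ f : V, ((Tmap f : Lp ℝ 2 μ) : ℝ → ℝ) =ᵐ[μ] (f : ℝ → ℝ) :=
    fun f => MemLp.coeFn_toLp (hmem _ (hVmem f).continuous)
  have hnorm : ∀ f : V, ‖Tmap f‖ ^ 2 = ∫ r in Set.Ioc 0 T, (f : ℝ → ℝ) r ^ 2 * w r := by
    intro f
    have h1 : (inner ℝ (Tmap f) (Tmap f) : ℝ) = ∫ r, ((f : ℝ → ℝ) r) * ((f : ℝ → ℝ) r) ∂μ := by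
      rw [L2.inner_def]
      apply integral_congr_ae
      filter_upwards [hcoe f] with r e1
      rw [e1, RCLike.inner_apply, starRingEnd_apply, star_trivial]
    rw [← real_inner_self_eq_norm_sq (Tmap f), h1, hμ,
      integral_withDensity_eq_integral_smul hdens]
    apply integral_congr_ae
    filter_upwards [hww₀] with r e1
    show dens r • (((f : ℝ → ℝ) r) * ((f : ℝ → ℝ) r)) = (f : ℝ → ℝ) r ^ 2 * w r
    rw [NNReal.smul_def, smul_eq_mul]
    have h2 : ((dens r : ℝ)) = w₀ r := Real.coe_toNNReal _ (hw₀nn r)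
    rw [h2, e1]; ring
  have hLbound : ∀ f : V, |Lmap f| ≤ Real.sqrt M * ‖Tmap f‖ := by
    intro f
    have h1 := hkey (f : ℝ → ℝ) f.2
    rw [← hnorm f] at h1
    have h2 : |Lmap f| = Real.sqrt ((Lmap f) ^ 2) := (Real.sqrt_sq_eq_abs _).symm
    rw [h2]
    calc Real.sqrt ((Lmap f) ^ 2) ≤ Real.sqrt (M * ‖Tmap f‖ ^ 2) := Real.sqrt_le_sqrt h1
    _ = Real.sqrt M * ‖Tmap f‖ := by
        rw [Real.sqrt_mul hM0, Real.sqrt_sq (norm_nonneg _)]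
  have hker : LinearMap.ker Tmap ≤ LinearMap.ker Lmap := by
    intro f hf
    rw [LinearMap.mem_ker] at *
    have h1 := hLbound f
    rw [hf, norm_zero, mul_zero] at h1
    exact abs_eq_zero.mp (le_antisymm h1 (abs_nonneg _))
  set P : Submodule ℝ (Lp ℝ 2 μ) := LinearMap.range Tmap with hP
  let e := Tmap.quotKerEquivRange
  let ℓ₀ : P →ₗ[ℝ] ℝ := ((LinearMap.ker Tmap).liftQ Lmap hker).comp (e.symm : P →ₗ[ℝ] _)
  have hℓ₀ : ∀ f : V, ℓ₀ ⟨Tmap f, LinearMap.mem_range_self Tmap f⟩ = Lmap f := by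
    intro f
    have h1 : e (Submodule.Quotient.mk f) = ⟨Tmap f, LinearMap.mem_range_self Tmap f⟩ :=
      Subtype.ext (LinearMap.quotKerEquivRange_apply_mk Tmap f)
    have h2 : e.symm ⟨Tmap f, LinearMap.mem_range_self Tmap f⟩ = Submodule.Quotient.mk f := by
      rw [← h1]; exact e.symm_apply_apply _
    show ((LinearMap.ker Tmap).liftQ Lmap hker) (e.symm ⟨Tmap f, _⟩) = Lmap f
    rw [h2]
    exact Submodule.liftQ_apply _ Lmap f
  have hℓ₀bound : ∀ x : P, ‖ℓ₀ x‖ ≤ Real.sqrt M * ‖x‖ := by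
    rintro ⟨x, hx⟩
    obtain ⟨f, rfl⟩ := hx
    rw [show (⟨Tmap f, LinearMap.mem_range_self Tmap f⟩ : P)
      = ⟨Tmap f, LinearMap.mem_range_self Tmap f⟩ from rfl, hℓ₀ f]
    exact hLbound f
  let ℓc : P →L[ℝ] ℝ := LinearMap.mkContinuous ℓ₀ (Real.sqrt M) hℓ₀bound
  obtain ⟨G, hG, -⟩ := exists_extension_norm_eq P ℓc
  set k₀ := (InnerProductSpace.toDual ℝ (Lp ℝ 2 μ)).symm G with hk₀def
  have hk₀ : ∀ f : V, (inner ℝ k₀ (Tmap f) : ℝ) = Lmap f := by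
    intro f
    rw [hk₀def, InnerProductSpace.toDual_symm_apply]
    have h1 := hG ⟨Tmap f, LinearMap.mem_range_self Tmap f⟩
    rw [h1]
    show ℓ₀ _ = _
    exact hℓ₀ f
  set h : ℝ → ℝ := (Lp.aestronglyMeasurable k₀).mk ⇑k₀ with hhdef
  have hhk₀ : ⇑k₀ =ᵐ[μ] h := (Lp.aestronglyMeasurable k₀).ae_eq_mk
  have hhm : Measurable h := (Lp.aestronglyMeasurable k₀).stronglyMeasurable_mk.measurable
  have hhmem : MemLp h 2 μ := (Lp.memLp k₀).ae_eq hhk₀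
  have hintμ : ∀ g : ℝ → ℝ, Integrable g μ → Integrable (fun r => g r * w₀ r) ν := by
    intro g hg
    rw [hμ] at hg
    have h1 : Integrable (fun r => dens r • g r) ν :=
      (integrable_withDensity_iff_integrable_smul (E := ℝ) (f := dens) (g := g) (μ := ν) hdens).1 hg
    apply h1.congr
    apply Eventually.of_forall
    intro r
    show dens r • g r = g r * w₀ r
    rw [NNReal.smul_def, smul_eq_mul, Real.coe_toNNReal _ (hw₀nn r)]; ring
  have hρ : Integrable (fun r => h r * w₀ r) ν := hintμ h (hhmem.integrable one_le_two)
  have hw₀h2 : Integrable (fun r => w₀ r * h r ^ 2) ν := by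
    have := hintμ (fun r => h r ^ 2) hhmem.integrable_sq
    apply this.congr
    exact Eventually.of_forall fun r => by ring
  have hrep : ∀ f : ℝ → ℝ, ContDiff ℝ 1 f →
      RSint T f a = ∫ r in Set.Ioc 0 T, f r * (h r * w₀ r) := by
    intro f hf
    have hfV : f ∈ V := by exact hf
    have h1 := hk₀ ⟨f, hfV⟩
    rw [L2.inner_def] at h1
    have h2 : (∫ r, f r * h r ∂μ) = RSint T f a := by
      rw [show RSint T f a = Lmap ⟨f, hfV⟩ from rfl, ← h1]
      apply integral_congr_ae
      filter_upwards [hhk₀, hcoe ⟨f, hfV⟩] with r e1 e2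
      rw [RCLike.inner_apply, starRingEnd_apply, star_trivial, e1, e2]
    rw [hμ, integral_withDensity_eq_integral_smul hdens] at h2
    rw [← h2]
    apply integral_congr_ae
    apply Eventually.of_forall
    intro r
    show dens r • (f r * h r) = f r * (h r * w₀ r)
    rw [NNReal.smul_def, smul_eq_mul, Real.coe_toNNReal _ (hw₀nn r)]; ring
  exact ⟨h, w₀, hhm, hw₀meas, hw₀nn, hww₀, hρ, hw₀h2, hrep⟩

lemma densRep (T : ℝ) (hT : 0 < T) (a ρ : ℝ → ℝ)
    (ha : ContinuousOn a (Set.Icc 0 T)) (ha0 : a 0 = 0)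
    (hρint : IntegrableOn ρ (Set.Ioc 0 T))
    (hrep : ∀ f : ℝ → ℝ, ContDiff ℝ 1 f →
      RSint T f a = ∫ r in Set.Ioc 0 T, f r * ρ r) :
    ∀ t ∈ Set.Icc 0 T, a t = ∫ s in Set.Ioc 0 t, ρ s := by
  set ν := volume.restrict (Set.Ioc 0 T) with hν
  set K : ℝ → ℝ := fun t => ∫ s in Set.Ioc 0 t, ρ s with hKdef
  have hKcont : ContinuousOn K (Set.Icc 0 T) := by
    apply intervalIntegral.continuousOn_primitive
    exact (integrableOn_Icc_iff_integrableOn_Ioc).2 hρint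
  have hIBP : ∀ f : ℝ → ℝ, ContDiff ℝ 1 f →
      (∫ r in Set.Ioc 0 T, f r * ρ r) = f T * K T - ∫ r in Set.Ioc 0 T, K r * deriv f r := by
    intro f hf
    have hdfc : Continuous (deriv f) := hf.continuous_deriv le_rfl
    have hfc : Continuous f := hf.continuous
    have hdfint : Integrable (deriv f) ν :=
      (hdfc.continuousOn.integrableOn_compact isCompact_Icc).mono_set Set.Ioc_subset_Icc_self
    obtain ⟨C, hC⟩ := IsCompact.exists_bound_of_continuousOn
      (isCompact_Icc (a := (0:ℝ)) (b := T)) hfc.continuousOn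
    have hfbd : ∀ᵐ s ∂ν, ‖f s‖ ≤ C :=
      (ae_restrict_iff' measurableSet_Ioc).2
        (Eventually.of_forall fun s hs => hC s (Set.Ioc_subset_Icc_self hs))
    have hfρint : Integrable (fun r => f r * ρ r) ν :=
      Integrable.bdd_mul hρint hfc.aestronglyMeasurable hfbd
    set F : ℝ × ℝ → ℝ :=
      fun p => Set.indicator {q : ℝ × ℝ | q.1 ≤ q.2} (fun q => ρ q.1 * deriv f q.2) p with hF
    have hFint : Integrable F (ν.prod ν) := by
      apply Integrable.indicator
      · exact Integrable.mul_prod hρint hdfint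
      · exact measurableSet_le measurable_fst measurable_snd
    have hswap : (∫ s, (∫ r, F (s, r) ∂ν) ∂ν) = ∫ r, (∫ s, F (s, r) ∂ν) ∂ν := by
      exact integral_integral_swap hFint
    have hL : (∫ s, (∫ r, F (s, r) ∂ν) ∂ν) = f T * K T - ∫ r in Set.Ioc 0 T, f r * ρ r := by
      have hin : ∀ s ∈ Set.Ioc 0 T, (∫ r, F (s, r) ∂ν) = ρ s * (f T - f s) := by
        intro s hs
        have e1 : (fun r => F (s, r)) = Set.indicator (Set.Ici s) (fun r => ρ s * deriv f r) := by
          funext r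
          simp only [hF, Set.indicator_apply, Set.mem_setOf_eq, Set.mem_Ici]
        rw [e1, integral_indicator measurableSet_Ici]
        rw [hν, Measure.restrict_restrict measurableSet_Ici]
        have e2 : Set.Ici s ∩ Set.Ioc 0 T = Set.Icc s T := by
          ext x
          simp only [Set.mem_inter_iff, Set.mem_Ici, Set.mem_Ioc, Set.mem_Icc]
          constructor
          · rintro ⟨h1, _, h3⟩; exact ⟨h1, h3⟩
          · rintro ⟨h1, h2⟩; exact ⟨h1, lt_of_lt_of_le hs.1 h1, h2⟩
        rw [e2, integral_const_mul, integral_Icc_eq_integral_Ioc,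
          ← intervalIntegral.integral_of_le hs.2]
        rw [intervalIntegral.integral_deriv_eq_sub
          (fun x _ => (hf.differentiable one_ne_zero) x) (hdfc.intervalIntegrable _ _)]
      calc (∫ s, (∫ r, F (s, r) ∂ν) ∂ν) = ∫ s, ρ s * (f T - f s) ∂ν := by
            apply integral_congr_ae
            filter_upwards [ae_restrict_mem measurableSet_Ioc] with s hs
            exact hin s hs
        _ = ∫ s, (f T * ρ s - f s * ρ s) ∂ν := by
            apply integral_congr_ae; apply Eventually.of_forall; intro s; ring
        _ = f T * K T - ∫ r in Set.Ioc 0 T, f r * ρ r := by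
            rw [integral_sub (hρint.const_mul (f T)) hfρint, integral_const_mul]
    have hR : (∫ r, (∫ s, F (s, r) ∂ν) ∂ν) = ∫ r in Set.Ioc 0 T, K r * deriv f r := by
      apply integral_congr_ae
      filter_upwards [ae_restrict_mem measurableSet_Ioc] with r hr
      have e1 : (fun s => F (s, r)) = Set.indicator (Set.Iic r) (fun s => ρ s * deriv f r) := by
        funext s
        simp only [hF, Set.indicator_apply, Set.mem_setOf_eq, Set.mem_Iic]
      rw [e1, integral_indicator measurableSet_Iic]
      rw [hν, Measure.restrict_restrict measurableSet_Iic]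
      have e2 : Set.Iic r ∩ Set.Ioc 0 T = Set.Ioc 0 r := by
        ext x
        simp only [Set.mem_inter_iff, Set.mem_Iic, Set.mem_Ioc]
        constructor
        · rintro ⟨h1, h2, _⟩; exact ⟨h2, h1⟩
        · rintro ⟨h1, h2⟩; exact ⟨h2, h1, h2.trans hr.2⟩
      rw [e2, integral_mul_const]
    rw [hswap, hR] at hL
    linarith [hL]
  have hcd : ∀ f : ℝ → ℝ, ContDiff ℝ 1 f → Continuous (deriv f) :=
    fun f hf => hf.continuous_deriv le_rfl
  have hintg : ∀ g f : ℝ → ℝ, ContinuousOn g (Set.Icc 0 T) → Continuous f →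
      IntegrableOn (fun r => g r * f r) (Set.Ioc 0 T) := by
    intro g f hg hf
    exact ((hg.mul hf.continuousOn).integrableOn_compact isCompact_Icc).mono_set
      Set.Ioc_subset_Icc_self
  have hAX : ∀ f : ℝ → ℝ, ContDiff ℝ 1 f →
      f T * a T - (∫ r in Set.Ioc 0 T, a r * deriv f r)
        = f T * K T - ∫ r in Set.Ioc 0 T, K r * deriv f r := by
    intro f hf
    have h1 := hrep f hf
    rw [hIBP f hf] at h1
    exact h1
  have hgT : a T = K T := by
    have h1 := hAX (fun _ => 1) contDiff_const
    simpa [deriv_const] using h1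
  have hortho : ∀ ψ : ℝ → ℝ, Continuous ψ →
      (∫ r in Set.Ioc 0 T, (a r - K r) * ψ r) = 0 := by
    intro ψ hψ
    set f : ℝ → ℝ := fun x => ∫ t in (0:ℝ)..x, ψ t with hfdef
    have hfd : ∀ x, HasDerivAt f (ψ x) x := by
      intro x
      exact intervalIntegral.integral_hasDerivAt_right (hψ.intervalIntegrable 0 x)
        (hψ.stronglyMeasurable.stronglyMeasurableAtFilter) hψ.continuousAt
    have hderiv : deriv f = ψ := funext fun x => (hfd x).deriv
    have hfC1 : ContDiff ℝ 1 f := contDiff_one_iff_deriv.2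
      ⟨fun x => (hfd x).differentiableAt, by rw [hderiv]; exact hψ⟩
    have h1 := hAX f hfC1
    rw [hderiv, hgT] at h1
    have h2 : (∫ r in Set.Ioc 0 T, a r * ψ r) = ∫ r in Set.Ioc 0 T, K r * ψ r := by
      linarith
    rw [show (fun r => (a r - K r) * ψ r) = fun r => a r * ψ r - K r * ψ r
      from funext fun r => by ring]
    rw [integral_sub (hintg a ψ ha hψ) (hintg K ψ hKcont hψ), h2, sub_self]
  have hgc : ContinuousOn (fun r => a r - K r) (Set.Icc 0 T) := ha.sub hKcont
  set ψ : ℝ → ℝ := Set.IccExtend hT.le ((Set.Icc 0 T).restrict (fun r => a r - K r)) with hψdef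
  have hψc : Continuous ψ := Continuous.Icc_extend' (hgc.restrict)
  have hψeq : ∀ r ∈ Set.Icc 0 T, ψ r = a r - K r := by
    intro r hr
    rw [hψdef, Set.IccExtend_of_mem hT.le _ hr]
    rfl
  have h0 := hortho ψ hψc
  have h1 : (∫ r in Set.Ioc 0 T, (a r - K r) * (a r - K r)) = 0 := by
    have e : (∫ r in Set.Ioc 0 T, (a r - K r) * (a r - K r))
        = ∫ r in Set.Ioc 0 T, (a r - K r) * ψ r := by
      apply integral_congr_ae
      filter_upwards [ae_restrict_mem measurableSet_Ioc] with r hr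
      rw [hψeq r (Set.Ioc_subset_Icc_self hr)]
    rw [e, h0]
  have hint2 : IntegrableOn (fun r => (a r - K r) * (a r - K r)) (Set.Ioc 0 T) :=
    ((hgc.mul hgc).integrableOn_compact isCompact_Icc).mono_set Set.Ioc_subset_Icc_self
  have hae := (integral_eq_zero_iff_of_nonneg_ae
    (Eventually.of_forall fun r => mul_self_nonneg _) hint2).1 h1
  have hgae : ∀ᵐ s ∂(volume : Measure ℝ), s ∈ Set.Ioc 0 T → a s - K s = 0 := by
    rw [← ae_restrict_iff' measurableSet_Ioc]
    filter_upwards [hae] with s hs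
    exact mul_self_eq_zero.mp hs
  have hnull : ∀ t ∈ Set.Ioc 0 T, a t - K t = 0 := by
    intro t ht
    by_contra hgt
    have hcw : ContinuousWithinAt (fun r => a r - K r) (Set.Icc 0 T) t :=
      hgc t (Set.Ioc_subset_Icc_self ht)
    rw [Metric.continuousWithinAt_iff] at hcw
    obtain ⟨δ, hδ, hball⟩ := hcw (|a t - K t|) (abs_pos.2 hgt)
    set c := max (t - δ/2) 0 with hcdef
    have hct : c < t := max_lt (by linarith) ht.1
    have hclb : t - δ/2 ≤ c := le_max_left _ _
    have hsub : Set.Ioc c t ⊆ {s : ℝ | ¬ (s ∈ Set.Ioc 0 T → a s - K s = 0)} := by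
      intro s hs
      have hs0 : 0 < s := lt_of_le_of_lt (le_max_right _ _) hs.1
      have hsT : s ≤ T := hs.2.trans ht.2
      simp only [Set.mem_setOf_eq, Classical.not_imp]
      refine ⟨⟨hs0, hsT⟩, ?_⟩
      intro heq0
      have hd : dist s t < δ := by
        rw [Real.dist_eq, abs_lt]
        constructor
        · have := hs.1; linarith
        · have := hs.2; linarith
      have h2 := hball ⟨le_of_lt hs0, hsT⟩ hd
      rw [heq0] at h2
      rw [Real.dist_eq, zero_sub, abs_neg] at h2
      exact lt_irrefl _ h2
    have h3 := measure_mono_null hsub (ae_iff.1 hgae)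
    rw [Real.volume_Ioc] at h3
    rw [ENNReal.ofReal_eq_zero] at h3
    linarith
  intro t ht
  rcases eq_or_lt_of_le ht.1 with heq | hlt
  · rw [← heq, ha0]
    simp [hKdef, Set.Ioc_self]
  · exact sub_eq_zero.mp (hnull t ⟨hlt, ht.2⟩)


lemma rep (T : ℝ) (hT : 0 < T) (a w : ℝ → ℝ)
    (ha : ContinuousOn a (Set.Icc 0 T)) (ha0 : a 0 = 0)
    (hw : ContinuousOn w (Set.Icc 0 T)) (hw0 : ∀ r ∈ Set.Icc 0 T, 0 ≤ w r)
    (hbdd : BddAbove {x : ℝ | ∃ f : ℝ → ℝ, ContDiff ℝ 1 f ∧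
      x = (1/2) * RSint T f a - (1/4) * ∫ r in Set.Ioc 0 T, f r ^ 2 * w r}) :
    ∃ k : ℝ → ℝ, Measurable k ∧
      (∫⁻ r in Set.Ioc 0 T, ENNReal.ofReal ((k r) ^ 2 * w r)) < ⊤ ∧
      ∀ t ∈ Set.Icc 0 T, a t = ∫ s in Set.Ioc 0 t, (1/2) * k s * w s := by
  obtain ⟨M, hM0, hkey⟩ := key_bound T a w
    (fun r hr => hw0 r (Set.Ioc_subset_Icc_self hr)) hbdd
  obtain ⟨h, w₀, hhm, hw₀m, hw₀nn, hww₀, hρint, hw₀h2, hrep⟩ :=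
    coreRep T hT a w ha ha0 hw hw0 M hM0 hkey
  have hpt := densRep T hT a (fun r => h r * w₀ r) ha ha0 hρint hrep
  refine ⟨fun r => 2 * h r, measurable_const.mul hhm, ?_, ?_⟩
  · have e : (fun r => ENNReal.ofReal ((2 * h r) ^ 2 * w r))
        =ᵐ[volume.restrict (Set.Ioc 0 T)]
        fun r => ENNReal.ofReal (4 * (w₀ r * h r ^ 2)) := by
      filter_upwards [hww₀] with r hr
      rw [← hr]
      congr 1
      ring
    calc (∫⁻ r in Set.Ioc 0 T, ENNReal.ofReal ((2 * h r) ^ 2 * w r))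
        = ∫⁻ r in Set.Ioc 0 T, ENNReal.ofReal (4 * (w₀ r * h r ^ 2)) := lintegral_congr_ae e
      _ < ⊤ := (hw₀h2.const_mul 4).lintegral_lt_top
  · intro t ht
    rw [hpt t ht]
    apply integral_congr_ae
    have hsub : Set.Ioc 0 t ⊆ Set.Ioc 0 T := Set.Ioc_subset_Ioc_right ht.2
    filter_upwards [ae_restrict_of_ae_restrict_of_subset hsub hww₀] with s hs
    rw [← hs]
    ring

/-- If `sup_f J_{f,0}(φ) < ∞` and `sup_g J_{0,g}(φ) < ∞`, then `Re φ`,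
`Im φ` are absolutely continuous with a.e. derivatives
`Re φ' + 1 = ½ k (|φ| + Re φ)` and `Im φ' = ½ l (|φ| − Re φ)` for measurable `k, l`
with `∫₀ᵀ k²(|φ|+Re φ) + ∫₀ᵀ l²(|φ|−Re φ) < ∞`; the absolute continuity and the a.e.
derivative identities are recorded as integral representations. -/
theorem stmt13 (T : ℝ) (hT : 0 < T) (φ : ℝ → ℂ)
    (hφc : ContinuousOn φ (Set.Icc 0 T)) (hφ0 : φ 0 = 0)
    (hbddf : BddAbove {x : ℝ | ∃ f : ℝ → ℝ, ContDiff ℝ 1 f ∧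
      x = Jfun T f (fun _ => 0) φ})
    (hbddg : BddAbove {x : ℝ | ∃ g : ℝ → ℝ, ContDiff ℝ 1 g ∧
      x = Jfun T (fun _ => 0) g φ}) :
    ∃ k l : ℝ → ℝ, Measurable k ∧ Measurable l ∧
      (∫⁻ r in Set.Ioc 0 T,
          ENNReal.ofReal ((k r) ^ 2 * (‖φ r‖ + (φ r).re))) +
        (∫⁻ r in Set.Ioc 0 T,
          ENNReal.ofReal ((l r) ^ 2 * (‖φ r‖ - (φ r).re))) < ⊤ ∧
      (∀ t ∈ Set.Icc 0 T, (φ t).re =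
        -t + ∫ s in Set.Ioc 0 t, (1 / 2) * k s * (‖φ s‖ + (φ s).re)) ∧
      (∀ t ∈ Set.Icc 0 T, (φ t).im =
        ∫ s in Set.Ioc 0 t, (1 / 2) * l s * (‖φ s‖ - (φ s).re)) := by
  have hre : ContinuousOn (fun r => (φ r).re) (Set.Icc 0 T) :=
    Complex.continuous_re.comp_continuousOn hφc
  have him : ContinuousOn (fun r => (φ r).im) (Set.Icc 0 T) :=
    Complex.continuous_im.comp_continuousOn hφc
  have habs : ContinuousOn (fun r => ‖φ r‖) (Set.Icc 0 T) :=
    continuous_norm.comp_continuousOn hφc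
  have ha₁ : ContinuousOn (fun r => (φ r).re + r) (Set.Icc 0 T) := hre.add continuousOn_id
  have ha₁0 : (φ 0).re + 0 = 0 := by rw [hφ0]; simp
  have ha₂0 : (φ 0).im = 0 := by rw [hφ0]; simp
  have hw₁ : ContinuousOn (fun r => ‖φ r‖ + (φ r).re) (Set.Icc 0 T) := habs.add hre
  have hw₂ : ContinuousOn (fun r => ‖φ r‖ - (φ r).re) (Set.Icc 0 T) := habs.sub hre
  have hw₁0 : ∀ r ∈ Set.Icc 0 T, 0 ≤ ‖φ r‖ + (φ r).re := fun r _ => by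
    have := Complex.abs_re_le_norm (φ r)
    have := neg_abs_le ((φ r).re)
    linarith
  have hw₂0 : ∀ r ∈ Set.Icc 0 T, 0 ≤ ‖φ r‖ - (φ r).re := fun r _ => by
    have := Complex.abs_re_le_norm (φ r)
    have := le_abs_self ((φ r).re)
    linarith
  have hJf : ∀ f : ℝ → ℝ, Jfun T f (fun _ => 0) φ
      = (1/2) * RSint T f (fun r => (φ r).re + r)
        - (1/4) * ∫ r in Set.Ioc 0 T, f r ^ 2 * (‖φ r‖ + (φ r).re) := by
    intro f
    unfold Jfun
    have e0 : RSint T (fun _ => (0:ℝ)) (fun r => (φ r).im) = 0 := by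
      unfold RSint
      simp
    rw [e0, add_zero]
    have e1 : (∫ r in Set.Ioc 0 T,
        (f r ^ 2 * (‖φ r‖ + (φ r).re) / 2
          + (fun _ => (0:ℝ)) r ^ 2 * (‖φ r‖ - (φ r).re) / 2
          + f r * (fun _ => (0:ℝ)) r * (φ r).im))
        = (1/2) * ∫ r in Set.Ioc 0 T, f r ^ 2 * (‖φ r‖ + (φ r).re) := by
      rw [← integral_const_mul]
      apply integral_congr_ae
      apply Eventually.of_forall
      intro r
      show _ = (1:ℝ)/2 * (f r ^ 2 * (‖φ r‖ + (φ r).re))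
      ring
    rw [e1]
    ring
  have hJg : ∀ g : ℝ → ℝ, Jfun T (fun _ => 0) g φ
      = (1/2) * RSint T g (fun r => (φ r).im)
        - (1/4) * ∫ r in Set.Ioc 0 T, g r ^ 2 * (‖φ r‖ - (φ r).re) := by
    intro g
    unfold Jfun
    have e0 : RSint T (fun _ => (0:ℝ)) (fun r => (φ r).re + r) = 0 := by
      unfold RSint
      simp
    rw [e0, zero_add]
    have e1 : (∫ r in Set.Ioc 0 T,
        ((fun _ => (0:ℝ)) r ^ 2 * (‖φ r‖ + (φ r).re) / 2
          + g r ^ 2 * (‖φ r‖ - (φ r).re) / 2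
          + (fun _ => (0:ℝ)) r * g r * (φ r).im))
        = (1/2) * ∫ r in Set.Ioc 0 T, g r ^ 2 * (‖φ r‖ - (φ r).re) := by
      rw [← integral_const_mul]
      apply integral_congr_ae
      apply Eventually.of_forall
      intro r
      show _ = (1:ℝ)/2 * (g r ^ 2 * (‖φ r‖ - (φ r).re))
      ring
    rw [e1]
    ring
  have hset1 : {x : ℝ | ∃ f : ℝ → ℝ, ContDiff ℝ 1 f ∧ x = Jfun T f (fun _ => 0) φ}
      = {x : ℝ | ∃ f : ℝ → ℝ, ContDiff ℝ 1 f ∧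
        x = (1/2) * RSint T f (fun r => (φ r).re + r)
          - (1/4) * ∫ r in Set.Ioc 0 T, f r ^ 2 * (‖φ r‖ + (φ r).re)} := by
    ext x
    constructor
    · rintro ⟨f, hf, rfl⟩
      exact ⟨f, hf, hJf f⟩
    · rintro ⟨f, hf, rfl⟩
      exact ⟨f, hf, (hJf f).symm⟩
  have hset2 : {x : ℝ | ∃ g : ℝ → ℝ, ContDiff ℝ 1 g ∧ x = Jfun T (fun _ => 0) g φ}
      = {x : ℝ | ∃ g : ℝ → ℝ, ContDiff ℝ 1 g ∧
        x = (1/2) * RSint T g (fun r => (φ r).im)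
          - (1/4) * ∫ r in Set.Ioc 0 T, g r ^ 2 * (‖φ r‖ - (φ r).re)} := by
    ext x
    constructor
    · rintro ⟨g, hg, rfl⟩
      exact ⟨g, hg, hJg g⟩
    · rintro ⟨g, hg, rfl⟩
      exact ⟨g, hg, (hJg g).symm⟩
  rw [hset1] at hbddf
  rw [hset2] at hbddg
  obtain ⟨k, hk, hkfin, hkrep⟩ := rep T hT (fun r => (φ r).re + r)
    (fun r => ‖φ r‖ + (φ r).re) ha₁ ha₁0 hw₁ hw₁0 hbddf
  obtain ⟨l, hl, hlfin, hlrep⟩ := rep T hT (fun r => (φ r).im)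
    (fun r => ‖φ r‖ - (φ r).re) him ha₂0 hw₂ hw₂0 hbddg
  refine ⟨k, l, hk, hl, ?_, ?_, ?_⟩
  · exact ENNReal.add_lt_top.2 ⟨hkfin, hlfin⟩
  · intro t ht
    have h1 := hkrep t ht
    have h2 : (∫ s in Set.Ioc 0 t, (1/2) * k s * (‖φ s‖ + (φ s).re))
        = ∫ s in Set.Ioc 0 t, (1 / 2) * k s * (‖φ s‖ + (φ s).re) := rfl
    linarith [h1]
  · intro t ht
    exact hlrep t ht
end
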